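/- In the linear coin-removal game with gaps, if an arrangement has an even and positive number of heads-up coins, then for every choice of heads-up coin to remove, the resulting arrangement still has at least one part that is not removable; hence the original arrangement is not removable. -/
import Mathlib


/-- Flip the coin at position `j` if a coin is present there. -/
def gFlip (l : List (Option Bool)) (j : ℕ) : List (Option Bool) :=
  l.set j ((l.getD j none).map (!·))

/-- One move in the linear coin-removal game with gaps. -/
def gStep (A B : List (Option Bool)) : Prop :=
  ∃ i, A.getD i none = some true ∧
    B = gFlip (gFlip (A.set i none) (i + 1)) (i - 1)

/-- An arrangement is removable if a sequence of moves empties all positions. -/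
def gRemovable (A : List (Option Bool)) : Prop :=
  Relation.ReflTransGen gStep A (List.replicate A.length none)

/-- Parity invariant: number of heads plus number of maximal blocks, mod 2.
`prev` records whether the previous position is occupied. -/
def pval : Bool → List (Option Bool) → ZMod 2
  | prev, [] => if prev then 1 else 0
  | prev, none :: t => (if prev then 1 else 0) + pval false t
  | _, some b :: t => (if b then 1 else 0) + pval true t

lemma z2 : (2 : ZMod 2) = 0 := by decide

lemma zadd (x : ZMod 2) : 1 + (1 + x) = x := by
  rw [← add_assoc, show (1 : ZMod 2) + 1 = 0 by decide, zero_add]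

lemma pval_core (u : List (Option Bool)) :
    pval false (gFlip u 0) = 1 + pval true u := by
  match u with
  | [] => simp [gFlip, pval]; decide
  | none :: v => simp [gFlip, pval, zadd]
  | some b :: v => cases b <;> simp [gFlip, pval, zadd]

lemma gFlip_cons_succ (x : Option Bool) (t : List (Option Bool)) (j : ℕ) :
    gFlip (x :: t) (j + 1) = x :: gFlip t j := by
  simp [gFlip]

lemma move_pval : ∀ (l : List (Option Bool)) (i : ℕ) (prev : Bool),
    l.getD i none = some true → (i = 0 → prev = false) →
    pval prev (gFlip (gFlip (l.set i none) (i + 1)) (i - 1)) = pval prev l := by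
  intro l
  induction l with
  | nil => intro i prev h _; simp at h
  | cons x t ih =>
    intro i prev h hp
    match i with
    | 0 =>
      have hx : x = some true := by simpa using h
      have hprev : prev = false := hp rfl
      subst hx hprev
      have : gFlip (gFlip ((some true :: t).set 0 none) 1) 0
          = none :: gFlip t 0 := by
        simp [gFlip]
      rw [this]
      simp [pval, pval_core, zadd]
    | 1 =>
      have ht : t.getD 0 none = some true := by simpa using h
      match t with
      | [] => simp at ht
      | y :: u =>
        have hy : y = some true := by simpa using ht
        subst hy
        have : gFlip (gFlip ((x :: some true :: u).set 1 none) 2) 0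
            = (x.map (!·)) :: none :: gFlip u 0 := by
          cases x <;> simp [gFlip]
        rw [this]
        cases x with
        | none =>
          simp [pval, pval_core, zadd]
        | some b =>
          cases b <;> simp [pval, pval_core, zadd]
    | (n + 2) =>
      have ht : t.getD (n + 1) none = some true := by simpa using h
      have hmove : gFlip (gFlip ((x :: t).set (n + 2) none) (n + 3)) (n + 1)
          = x :: gFlip (gFlip (t.set (n + 1) none) (n + 2)) n := by
        have h1 : (x :: t).set (n + 2) none = x :: t.set (n + 1) none := rfl
        rw [h1]
        rw [show (n + 3) = (n + 2) + 1 from rfl, gFlip_cons_succ,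
          show (n + 1) = n + 1 from rfl, gFlip_cons_succ]
      have hsub : ∀ pr : Bool,
          pval pr (gFlip (gFlip (t.set (n + 1) none) (n + 2)) n) = pval pr t := by
        intro pr
        have := ih (n + 1) pr ht (by omega)
        simpa using this
      rw [show (n + 2) - 1 = n + 1 from rfl] at *
      rw [hmove]
      cases x with
      | none => simp only [pval, hsub]
      | some b => simp only [pval, hsub]

lemma gStep_pval {A B : List (Option Bool)} (h : gStep A B) :
    pval false B = pval false A := by
  obtain ⟨i, hi, rfl⟩ := h
  exact move_pval A i false hi (fun _ => rfl)

lemma pval_replicate (n : ℕ) : pval false (List.replicate n none) = 0 := by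
  induction n with
  | zero => simp [pval]
  | succ m ih => simp [List.replicate_succ, pval, ih]

lemma rtg_pval : ∀ {A C : List (Option Bool)},
    Relation.ReflTransGen gStep A C → pval false A = pval false C := by
  intro A C h
  induction h using Relation.ReflTransGen.head_induction_on with
  | refl => rfl
  | head hstep _ ih => exact (gStep_pval hstep).symm.trans ih

lemma gRemovable_pval {A : List (Option Bool)} (h : gRemovable A) :
    pval false A = 0 := (rtg_pval h).trans (pval_replicate _)

lemma pval_map_some (A : List Bool) (hA : A ≠ []) (prev : Bool) :
    pval prev (A.map some) = (A.count true : ZMod 2) + 1 := by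
  have key : ∀ B : List Bool, pval true (B.map some) = (B.count true : ZMod 2) + 1 := by
    intro B
    induction B with
    | nil => simp [pval]
    | cons b t ih =>
      cases b <;> simp [pval, ih, List.count_cons] <;> push_cast <;> ring
  match A with
  | [] => exact absurd rfl hA
  | b :: t =>
    cases b <;> simp [pval, key, List.count_cons] <;> push_cast <;> ring

theorem linear_gaps_even_heads_not_removable (A : List Bool)
    (heven : Even (A.count true)) (hpos : 0 < A.count true) :
    (∀ B, gStep (A.map some) B → ¬ gRemovable B) ∧ ¬ gRemovable (A.map some) := by
  have hA : A ≠ [] := by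
    intro h; subst h; simp at hpos
  have hcast : (A.count true : ZMod 2) = 0 := by
    obtain ⟨k, hk⟩ := heven
    rw [hk]; push_cast; ring_nf; rw [z2, mul_zero]
  have hval : pval false (A.map some) = 1 := by
    rw [pval_map_some A hA false, hcast, zero_add]
  constructor
  · intro B hB hrem
    have h1 : pval false B = 1 := by rw [gStep_pval hB, hval]
    have h0 := gRemovable_pval hrem
    rw [h0] at h1
    exact absurd h1 (by decide)
  · intro hrem
    have h0 := gRemovable_pval hrem
    rw [hval] at h0
    exact absurd h0 (by decide)
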